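/- Let d ∈ ℕ with d ≥ 1 and let α, β, γ ∈ [0,∞) satisfy α + β > d/2 and max(α,β) ≠ d/2. Then sup_{v ∈ ℤ^d} Σ_{k ∈ ℤ^d} (λ_v)^γ / [(λ_k)^α (λ_{v−k})^β] < ∞ if and only if γ ≤ min(α, β, α + β − d/2). -/

import Mathlib

open scoped ENNReal

/-- `λ_x = 1 + x₁² + ⋯ + x_d²` for a lattice point `x ∈ ℤ^d`. -/
noncomputable def lam {d : ℕ} (x : Fin d → ℤ) : ℝ := 1 + ∑ i, ((x i : ℝ)) ^ 2

open Finset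

variable {d : ℕ}

lemma one_le_lam (x : Fin d → ℤ) : 1 ≤ lam x := by
  have : 0 ≤ ∑ i, ((x i : ℝ)) ^ 2 := Finset.sum_nonneg fun i _ => sq_nonneg _
  simp [lam]; linarith

lemma lam_pos (x : Fin d → ℤ) : 0 < lam x := lt_of_lt_of_le one_pos (one_le_lam x)

lemma lam_nonneg (x : Fin d → ℤ) : 0 ≤ lam x := (lam_pos x).le

lemma lam_zero : lam (0 : Fin d → ℤ) = 1 := by simp [lam]

lemma lam_add_le (a b : Fin d → ℤ) : lam (a + b) ≤ 2 * lam a + 2 * lam b := by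
  have h : ∀ i, ((a + b) i : ℝ) ^ 2 ≤ 2 * ((a i : ℝ))^2 + 2 * ((b i : ℝ))^2 := by
    intro i
    have : (((a + b) i : ℤ) : ℝ) = (a i : ℝ) + (b i : ℝ) := by push_cast [Pi.add_apply]; ring
    rw [this]; nlinarith [sq_nonneg ((a i : ℝ) - (b i : ℝ))]
  have hs : ∑ i, ((a+b) i : ℝ)^2 ≤ ∑ i, (2 * ((a i : ℝ))^2 + 2 * ((b i : ℝ))^2) :=
    Finset.sum_le_sum fun i _ => h i
  simp only [lam]
  rw [Finset.sum_add_distrib, ← Finset.mul_sum, ← Finset.mul_sum] at hs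
  linarith [Finset.sum_nonneg (fun i (_ : i ∈ Finset.univ) => sq_nonneg ((a i : ℝ)))]

lemma lam_split (v k : Fin d → ℤ) : lam v ≤ 2 * lam k + 2 * lam (v - k) := by
  have := lam_add_le k (v - k)
  simpa using this

lemma lam_le_four_of_le {v k : Fin d → ℤ} (h : lam k ≤ lam (v - k)) :
    lam v ≤ 4 * lam (v - k) := by
  have := lam_split v k; linarith

lemma lam_sub_le (v k : Fin d → ℤ) : lam (v - k) ≤ 2 * lam v + 2 * lam k := by
  have := lam_add_le v (-k)
  have hk : lam (-k) = lam k := by simp [lam]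
  simpa [sub_eq_add_neg, hk] using this

lemma card_le_of_lam_lt (n : ℕ) (F : Finset (Fin d → ℤ))
    (hF : ∀ k ∈ F, lam k < 2^(n+1)) :
    (F.card : ℝ) ≤ 8^d * ((2:ℝ) ^ ((d:ℝ)/2)) ^ n := by
  set m := (n+2)/2 with hm
  have h2m : n + 1 ≤ 2 * m := by omega
  have subset : F ⊆ Fintype.piFinset (fun _ : Fin d => Finset.Icc (-(2^m : ℤ)) (2^m)) := by
    intro k hk
    rw [Fintype.mem_piFinset]
    intro i
    have hsq : ((k i : ℝ))^2 ≤ lam k - 1 := by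
      have : ((k i : ℝ))^2 ≤ ∑ j, ((k j : ℝ))^2 :=
        Finset.single_le_sum (f := fun j => ((k j : ℝ))^2) (fun j _ => sq_nonneg _)
          (Finset.mem_univ i)
      simp only [lam]; linarith
    have h1 : ((k i : ℝ))^2 < (2:ℝ)^(n+1) := lt_of_le_of_lt hsq (by linarith [hF k hk])
    have hz : (k i)^2 < (2^(n+1) : ℤ) := by exact_mod_cast h1
    have hz2 : (k i)^2 < ((2^m : ℤ))^2 := by
      refine lt_of_lt_of_le hz ?_
      rw [← pow_mul]
      exact pow_le_pow_right₀ (by norm_num) (by omega)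
    have hpos : (0:ℤ) < 2^m := by positivity
    rw [Finset.mem_Icc]
    constructor <;> nlinarith
  have hcard : F.card ≤ 2^((m+2)*d) := by
    calc F.card ≤ _ := Finset.card_le_card subset
    _ = ∏ _i : Fin d, (Finset.Icc (-(2^m : ℤ)) (2^m)).card := Fintype.card_piFinset _
    _ ≤ 2^((m+2)*d) := by
        rw [Finset.prod_const, Finset.card_univ, Fintype.card_fin]
        have hc : (Finset.Icc (-(2^m : ℤ)) (2^m)).card ≤ 2^(m+2) := by
          rw [Int.card_Icc]
          have : ((2^m:ℤ) + 1 - (-(2^m:ℤ))) = 2*2^m+1 := by ring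
          rw [this]
          have h2 : (2*2^m+1 : ℤ) ≤ (2^(m+2) : ℤ) := by
            have : (1:ℤ) ≤ 2^m := one_le_pow₀ (by norm_num)
            calc (2*2^m+1 : ℤ) ≤ 2*2^m + 2^m := by linarith
            _ ≤ 2^(m+2) := by ring_nf; nlinarith
          exact Int.toNat_le.mpr (by exact_mod_cast h2)
        calc (Finset.Icc (-(2^m : ℤ)) (2^m)).card ^ d ≤ (2^(m+2))^d :=
              Nat.pow_le_pow_left hc d
        _ = 2^((m+2)*d) := by rw [← pow_mul]
  have hr : (F.card : ℝ) ≤ (2:ℝ)^(((m+2)*d : ℕ) : ℝ) := by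
    rw [Real.rpow_natCast]
    exact_mod_cast hcard
  refine hr.trans ?_
  have hrhs : (8:ℝ)^d * ((2:ℝ) ^ ((d:ℝ)/2)) ^ n = (2:ℝ)^((3*d : ℕ):ℝ) * (2:ℝ)^(((d:ℝ)/2) * n) := by
    rw [Real.rpow_natCast, ← Real.rpow_natCast ((2:ℝ) ^ ((d:ℝ)/2)) n,
      ← Real.rpow_mul (by norm_num)]
    norm_num [pow_mul]
  rw [hrhs, ← Real.rpow_add (by norm_num)]
  apply Real.rpow_le_rpow_of_exponent_le (by norm_num)
  have hmle : (m:ℝ) ≤ ((n:ℝ)+2)/2 := by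
    rw [hm]; push_cast [Nat.cast_div_le]
    calc ((((n+2)/2 : ℕ)):ℝ) ≤ ((n+2 : ℕ):ℝ)/((2:ℕ):ℝ) := Nat.cast_div_le
    _ = ((n:ℝ)+2)/2 := by push_cast; ring
  push_cast
  nlinarith [Nat.cast_nonneg (α := ℝ) d, Nat.cast_nonneg (α := ℝ) n]

lemma rpow_neg_anti {a b t : ℝ} (ha : 0 < a) (hab : a ≤ b) (ht : t ≤ 0) : b ^ t ≤ a ^ t := by
  have hb : 0 < b := lt_of_lt_of_le ha hab
  rw [← neg_neg t, Real.rpow_neg hb.le, Real.rpow_neg ha.le]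
  exact inv_anti₀ (Real.rpow_pos_of_pos ha _)
    (Real.rpow_le_rpow ha.le hab (neg_nonneg.2 ht))

noncomputable def eshell {d : ℕ} (k : Fin d → ℤ) : ℕ := Nat.log 2 ⌊lam k⌋₊

lemma floor_lam_ne_zero (k : Fin d → ℤ) : ⌊lam k⌋₊ ≠ 0 := by
  have : (1:ℕ) ≤ ⌊lam k⌋₊ := Nat.le_floor (by exact_mod_cast one_le_lam k)
  omega

lemma two_pow_eshell_le (k : Fin d → ℤ) : (2:ℝ)^(eshell k) ≤ lam k := by
  have h1 : (2:ℕ)^(eshell k) ≤ ⌊lam k⌋₊ := Nat.pow_log_le_self 2 (floor_lam_ne_zero k)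
  calc (2:ℝ)^(eshell k) = ((2^(eshell k) : ℕ) : ℝ) := by push_cast; ring
  _ ≤ (⌊lam k⌋₊ : ℝ) := by exact_mod_cast h1
  _ ≤ lam k := Nat.floor_le (lam_pos k).le

lemma lam_lt_two_pow_succ (k : Fin d → ℤ) : lam k < (2:ℝ)^(eshell k + 1) := by
  have h1 : ⌊lam k⌋₊ < 2^(eshell k + 1) := Nat.lt_pow_succ_log_self (by norm_num) _
  have h2 : ⌊lam k⌋₊ + 1 ≤ 2^(eshell k + 1) := h1
  calc lam k < (⌊lam k⌋₊ : ℝ) + 1 := Nat.lt_floor_add_one _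
  _ ≤ (2:ℝ)^(eshell k + 1) := by exact_mod_cast h2

lemma shell_sum (s : ℝ) (hs : 0 ≤ s) (n : ℕ) (F : Finset (Fin d → ℤ))
    (hF : ∀ k ∈ F, eshell k = n) :
    ∑ k ∈ F, lam k ^ (-s) ≤ 8^d * ((2:ℝ) ^ ((d:ℝ)/2 - s)) ^ n := by
  have hterm : ∀ k ∈ F, lam k ^ (-s) ≤ ((2:ℝ)^(-s))^n := by
    intro k hk
    have h1 : (2:ℝ)^n ≤ lam k := (hF k hk) ▸ two_pow_eshell_le k
    have : lam k ^ (-s) ≤ ((2:ℝ)^n) ^ (-s) :=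
      rpow_neg_anti (by positivity) h1 (neg_nonpos.2 hs)
    refine this.trans_eq ?_
    rw [← Real.rpow_natCast (2:ℝ) n, ← Real.rpow_mul (by norm_num : (0:ℝ) ≤ 2),
      ← Real.rpow_natCast ((2:ℝ)^(-s)) n, ← Real.rpow_mul (by norm_num : (0:ℝ) ≤ 2)]
    ring_nf
  have hsum : ∑ k ∈ F, lam k ^ (-s) ≤ F.card • ((2:ℝ)^(-s))^n :=
    Finset.sum_le_card_nsmul F _ _ hterm
  rw [nsmul_eq_mul] at hsum
  refine hsum.trans ?_
  have hcard : (F.card : ℝ) ≤ 8^d * ((2:ℝ) ^ ((d:ℝ)/2)) ^ n := by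
    apply card_le_of_lam_lt
    intro k hk
    exact (hF k hk) ▸ lam_lt_two_pow_succ k
  have hx : (0:ℝ) ≤ ((2:ℝ)^(-s))^n := by positivity
  calc (F.card : ℝ) * ((2:ℝ)^(-s))^n ≤ (8^d * ((2:ℝ) ^ ((d:ℝ)/2)) ^ n) * ((2:ℝ)^(-s))^n :=
        mul_le_mul_of_nonneg_right hcard hx
  _ = 8^d * ((2:ℝ) ^ ((d:ℝ)/2 - s)) ^ n := by
      rw [mul_assoc, ← mul_pow, ← Real.rpow_add (by norm_num)]
      ring_nf

lemma sum_le_shells (s : ℝ) (hs : 0 ≤ s) (F : Finset (Fin d → ℤ)) :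
    ∑ k ∈ F, lam k ^ (-s) ≤
      ∑ n ∈ F.image eshell, 8^d * ((2:ℝ) ^ ((d:ℝ)/2 - s)) ^ n := by
  rw [← Finset.sum_fiberwise_of_maps_to (g := eshell) (t := F.image eshell)
    (fun x hx => Finset.mem_image_of_mem _ hx)]
  apply Finset.sum_le_sum
  intro n hn
  exact shell_sum s hs n _ (fun k hk => (Finset.mem_filter.mp hk).2)

lemma two_pow_rpow_comm (t : ℝ) (n : ℕ) : ((2:ℝ)^t)^n = ((2:ℝ)^n : ℝ)^t := by
  rw [← Real.rpow_natCast ((2:ℝ)^t) n, ← Real.rpow_mul (by norm_num : (0:ℝ) ≤ 2),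
    ← Real.rpow_natCast (2:ℝ) n, ← Real.rpow_mul (by norm_num : (0:ℝ) ≤ 2)]
  ring_nf

/-- J1 : full sums -/
lemma J1 (s : ℝ) (hs : (d:ℝ)/2 < s) :
    ∃ C : ℝ, 0 ≤ C ∧ ∀ F : Finset (Fin d → ℤ), ∑ k ∈ F, lam k ^ (-s) ≤ C := by
  set x : ℝ := (2:ℝ) ^ ((d:ℝ)/2 - s) with hx
  have hx0 : 0 < x := Real.rpow_pos_of_pos (by norm_num) _
  have hx1 : x < 1 := Real.rpow_lt_one_of_one_lt_of_neg (by norm_num) (by linarith)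
  have hs0 : 0 ≤ s := le_trans (by positivity) hs.le
  have h1x : (0:ℝ) < 1 - x := by linarith
  refine ⟨8^d * (1-x)⁻¹, mul_nonneg (by positivity) (inv_nonneg.2 h1x.le), fun F => ?_⟩
  refine (sum_le_shells s hs0 F).trans ?_
  rw [← Finset.mul_sum]
  refine mul_le_mul_of_nonneg_left ?_ (by positivity)
  refine (Summable.sum_le_tsum _ (fun i _ => by positivity) (summable_geometric_of_lt_one hx0.le hx1)).trans ?_
  exact le_of_eq (tsum_geometric_of_lt_one hx0.le hx1)

/-- J2 : partial sums below -/
lemma J2 (s : ℝ) (hs0 : 0 ≤ s) (hs : s < (d:ℝ)/2) :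
    ∃ C : ℝ, 0 ≤ C ∧ ∀ (R : ℝ), 1 ≤ R → ∀ F : Finset (Fin d → ℤ),
      (∀ k ∈ F, lam k ≤ R) → ∑ k ∈ F, lam k ^ (-s) ≤ C * R ^ ((d:ℝ)/2 - s) := by
  set x : ℝ := (2:ℝ) ^ ((d:ℝ)/2 - s) with hx
  have hx1 : 1 < x := Real.one_lt_rpow_iff_of_pos (by norm_num) |>.mpr (Or.inl ⟨by norm_num, by linarith⟩)
  have hx0 : 0 < x := lt_trans one_pos hx1
  have hx1' : (0:ℝ) < x - 1 := by linarith
  refine ⟨8^d * (x / (x-1)), mul_nonneg (by positivity) (div_nonneg hx0.le hx1'.le),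
    fun R hR F hF => ?_⟩
  set N : ℕ := Nat.log 2 ⌊R⌋₊ with hN
  have hRfloor : ⌊R⌋₊ ≠ 0 := by
    have : (1:ℕ) ≤ ⌊R⌋₊ := Nat.le_floor (by exact_mod_cast hR)
    omega
  have hsub : F.image eshell ⊆ Finset.range (N+1) := by
    intro n hn
    rw [Finset.mem_image] at hn
    obtain ⟨k, hk, rfl⟩ := hn
    rw [Finset.mem_range, Nat.lt_succ_iff, hN]
    rw [Nat.le_log_iff_pow_le (by norm_num) hRfloor]
    refine Nat.le_floor ?_
    calc ((2^(eshell k) : ℕ) : ℝ) = (2:ℝ)^(eshell k) := by push_cast; ring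
    _ ≤ lam k := two_pow_eshell_le k
    _ ≤ R := hF k hk
  refine (sum_le_shells s hs0 F).trans ?_
  rw [← Finset.mul_sum, mul_assoc]
  refine mul_le_mul_of_nonneg_left ?_ (by positivity)
  have h1 : ∑ n ∈ F.image eshell, x ^ n ≤ ∑ n ∈ Finset.range (N+1), x ^ n :=
    Finset.sum_le_sum_of_subset_of_nonneg hsub (fun i _ _ => by positivity)
  refine h1.trans ?_
  rw [geom_sum_eq (ne_of_gt hx1)]
  have hxN : x ^ N ≤ R ^ ((d:ℝ)/2 - s) := by
    rw [hx, two_pow_rpow_comm]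
    refine Real.rpow_le_rpow (by positivity) ?_ (by linarith)
    calc ((2:ℝ)^N) = ((2^N : ℕ) : ℝ) := by push_cast; ring
    _ ≤ (⌊R⌋₊ : ℝ) := by exact_mod_cast Nat.pow_log_le_self 2 hRfloor
    _ ≤ R := Nat.floor_le (by linarith)
  rw [div_le_iff₀ hx1']
  have hR0 : 0 ≤ R ^ ((d:ℝ)/2 - s) := by positivity
  have hxx : x^(N+1) ≤ x * R ^ ((d:ℝ)/2 - s) := by
    have : x^(N+1) = x * x^N := by ring
    rw [this]
    exact mul_le_mul_of_nonneg_left hxN hx0.le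
  have heq : x / (x-1) * R ^ ((d:ℝ)/2 - s) * (x-1) = x * R ^ ((d:ℝ)/2 - s) := by
    field_simp
  rw [heq]
  linarith

/-- J3 : tails -/
lemma J3 (s : ℝ) (hs : (d:ℝ)/2 < s) :
    ∃ C : ℝ, 0 ≤ C ∧ ∀ (T : ℝ), 1 ≤ T → ∀ F : Finset (Fin d → ℤ),
      (∀ k ∈ F, T < lam k) → ∑ k ∈ F, lam k ^ (-s) ≤ C * T ^ ((d:ℝ)/2 - s) := by
  set x : ℝ := (2:ℝ) ^ ((d:ℝ)/2 - s) with hx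
  have hx0 : 0 < x := Real.rpow_pos_of_pos (by norm_num) _
  have hx1 : x < 1 := Real.rpow_lt_one_of_one_lt_of_neg (by norm_num) (by linarith)
  have hs0 : 0 ≤ s := le_trans (by positivity) hs.le
  have h1x : (0:ℝ) < 1 - x := by linarith
  refine ⟨8^d * ((2:ℝ)^(s - (d:ℝ)/2) * (1-x)⁻¹),
    mul_nonneg (by positivity) (mul_nonneg (by positivity) (inv_nonneg.2 h1x.le)),
    fun T hT F hF => ?_⟩
  set N : ℕ := Nat.log 2 ⌊T⌋₊ with hN
  have hTfloor : ⌊T⌋₊ ≠ 0 := by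
    have : (1:ℕ) ≤ ⌊T⌋₊ := Nat.le_floor (by exact_mod_cast hT)
    omega
  have hNle : ∀ n ∈ F.image eshell, N ≤ n := by
    intro n hn
    rw [Finset.mem_image] at hn
    obtain ⟨k, hk, rfl⟩ := hn
    by_contra hc
    push_neg at hc
    have h1 : eshell k + 1 ≤ N := hc
    have : (2:ℝ)^(eshell k + 1) ≤ (2:ℝ)^N := by
      apply pow_le_pow_right₀ (by norm_num) h1
    have h2N : (2:ℝ)^N ≤ T := by
      calc ((2:ℝ)^N) = ((2^N : ℕ) : ℝ) := by push_cast; ring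
      _ ≤ (⌊T⌋₊ : ℝ) := by exact_mod_cast Nat.pow_log_le_self 2 hTfloor
      _ ≤ T := Nat.floor_le (by linarith)
    have := lam_lt_two_pow_succ k
    have := hF k hk
    linarith
  refine (sum_le_shells s hs0 F).trans ?_
  rw [← Finset.mul_sum, mul_assoc]
  refine mul_le_mul_of_nonneg_left ?_ (by positivity)
  -- ∑ n ∈ t, x^n ≤ x^N * (1-x)⁻¹ ≤ 2^(s-d/2) T^(d/2-s) (1-x)⁻¹
  have key : ∑ n ∈ F.image eshell, x ^ n ≤ x^N * (1-x)⁻¹ := by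
    have h1 : ∑ n ∈ F.image eshell, x ^ n = x^N * ∑ n ∈ F.image eshell, x ^ (n - N) := by
      rw [Finset.mul_sum]
      apply Finset.sum_congr rfl
      intro n hn
      rw [← pow_add]
      congr 1
      have := hNle n hn
      omega
    rw [h1]
    refine mul_le_mul_of_nonneg_left ?_ (by positivity)
    have h2 : ∑ m ∈ (F.image eshell).image (· - N), x ^ m =
        ∑ n ∈ F.image eshell, x ^ (n - N) := by
      refine Finset.sum_image ?_
      intro a ha b hb hab
      have := hNle a ha; have := hNle b hb
      have hab' : a - N = b - N := hab
      omega
    rw [← h2]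
    refine (Summable.sum_le_tsum _ (fun i _ => by positivity)
      (summable_geometric_of_lt_one hx0.le hx1)).trans ?_
    exact le_of_eq (tsum_geometric_of_lt_one hx0.le hx1)
  refine key.trans ?_
  have hxN : x ^ N ≤ (2:ℝ)^(s - (d:ℝ)/2) * T ^ ((d:ℝ)/2 - s) := by
    rw [hx, two_pow_rpow_comm]
    have hT2 : T / 2 < (2:ℝ)^N := by
      have h1 : (⌊T⌋₊:ℕ) < 2^(N+1) := Nat.lt_pow_succ_log_self (by norm_num) _
      have h2 : T < (2:ℝ)^(N+1) := by
        calc T < (⌊T⌋₊ : ℝ) + 1 := Nat.lt_floor_add_one _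
        _ ≤ (2:ℝ)^(N+1) := by exact_mod_cast (Nat.succ_le_of_lt h1)
      have : (2:ℝ)^(N+1) = 2 * 2^N := by ring
      linarith
    calc ((2:ℝ)^N : ℝ) ^ ((d:ℝ)/2 - s) ≤ (T/2) ^ ((d:ℝ)/2 - s) :=
          rpow_neg_anti (by linarith) hT2.le (by linarith)
    _ = (2:ℝ)^(s - (d:ℝ)/2) * T ^ ((d:ℝ)/2 - s) := by
        rw [Real.div_rpow (by linarith) (by norm_num), div_eq_mul_inv,
          ← Real.rpow_neg (by norm_num : (0:ℝ) ≤ 2)]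
        ring_nf
  calc x^N * (1-x)⁻¹ ≤ ((2:ℝ)^(s - (d:ℝ)/2) * T ^ ((d:ℝ)/2 - s)) * (1-x)⁻¹ := by
        refine mul_le_mul_of_nonneg_right hxN (inv_nonneg.2 h1x.le)
  _ = (2:ℝ)^(s - (d:ℝ)/2) * (1-x)⁻¹ * T ^ ((d:ℝ)/2 - s) := by ring

lemma term_rw (v k : Fin d → ℤ) (α β γ : ℝ) :
    lam v ^ γ / (lam k ^ α * lam (v-k) ^ β)
      = lam v ^ γ * lam k ^ (-α) * lam (v-k) ^ (-β) := by
  rw [Real.rpow_neg (lam_pos k).le, Real.rpow_neg (lam_pos (v-k)).le,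
    div_eq_mul_inv, mul_inv]
  ring

/-- base pointwise bound on the region `lam v ≤ 4 * M` -/
lemma aux_base {L K M α β γ : ℝ} (hL : 1 ≤ L) (hK : 1 ≤ K) (hM : 1 ≤ M)
    (hLM : L ≤ 4*M) (hβ : 0 ≤ β) :
    L^γ * K^(-α) * M^(-β) ≤ 4^β * L^(γ-β) * K^(-α) := by
  have hL0 : (0:ℝ) < L := by linarith
  have h1 : M^(-β) ≤ 4^β * L^(-β) := by
    have h2 : (L/4)^(-β) = 4^β * L^(-β) := by
      rw [Real.div_rpow (by linarith) (by norm_num), Real.rpow_neg (by norm_num : (0:ℝ) ≤ 4),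
        div_eq_mul_inv, inv_inv, mul_comm]
    rw [← h2]
    exact rpow_neg_anti (by linarith) (by linarith) (by linarith)
  calc L^γ * K^(-α) * M^(-β) ≤ L^γ * K^(-α) * (4^β * L^(-β)) := by
        refine mul_le_mul_of_nonneg_left h1 ?_
        positivity
  _ = 4^β * (L^γ * L^(-β)) * K^(-α) := by ring
  _ = 4^β * L^(γ-β) * K^(-α) := by
      rw [← Real.rpow_add hL0]
      ring_nf

lemma aux1 {L K M α β γ : ℝ} (hL : 1 ≤ L) (hK : 1 ≤ K) (hM : 1 ≤ M)
    (hLM : L ≤ 4*M) (hβ : 0 ≤ β) (hγβ : γ ≤ β) :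
    L^γ * K^(-α) * M^(-β) ≤ 4^β * K^(-α) := by
  refine (aux_base hL hK hM hLM hβ).trans ?_
  have h1 : L^(γ-β) ≤ 1 := Real.rpow_le_one_of_one_le_of_nonpos hL (by linarith)
  calc 4^β * L^(γ-β) * K^(-α) ≤ 4^β * 1 * K^(-α) := by
        refine mul_le_mul_of_nonneg_right (mul_le_mul_of_nonneg_left h1 (by positivity)) ?_
        positivity
  _ = 4^β * K^(-α) := by ring

lemma aux2 {L K M α β β₂ γ : ℝ} (hL : 1 ≤ L) (hK : 1 ≤ K) (hM : 1 ≤ M)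
    (hLM : L ≤ 4*M) (hKM : K ≤ M) (hb0 : 0 ≤ β₂) (hb2 : β₂ ≤ β - γ) (hγ : 0 ≤ γ) :
    L^γ * K^(-α) * M^(-β) ≤ 4^β * K^(-(α+β₂)) := by
  have hK0 : (0:ℝ) < K := by linarith
  have hsplit : M^(-β) = M^(-(β-β₂)) * M^(-β₂) := by
    rw [← Real.rpow_add (by linarith : (0:ℝ) < M)]
    ring_nf
  have h2 : M^(-β₂) ≤ K^(-β₂) := rpow_neg_anti hK0 hKM (by linarith)
  have hβ' : 0 ≤ β - β₂ := by linarith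
  have h3 : L^γ * K^(-α) * M^(-(β-β₂)) ≤ 4^(β-β₂) * K^(-α) :=
    aux1 hL hK hM hLM hβ' (by linarith)
  calc L^γ * K^(-α) * M^(-β) = (L^γ * K^(-α) * M^(-(β-β₂))) * M^(-β₂) := by
        rw [hsplit]; ring
  _ ≤ (4^(β-β₂) * K^(-α)) * K^(-β₂) := by
      refine mul_le_mul h3 h2 (by positivity) (by positivity)
  _ ≤ (4^β * K^(-α)) * K^(-β₂) := by
      refine mul_le_mul_of_nonneg_right (mul_le_mul_of_nonneg_right ?_ (by positivity)) (by positivity)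
      exact Real.rpow_le_rpow_of_exponent_le (by norm_num) (by linarith)
  _ = 4^β * K^(-(α+β₂)) := by
      rw [neg_add, Real.rpow_add hK0]
      ring

lemma aux3b {L K M α β γ : ℝ} (hL : 1 ≤ L) (hK : 1 ≤ K) (hM : 1 ≤ M)
    (hKM : K ≤ M) (hβ : 0 ≤ β) :
    L^γ * K^(-α) * M^(-β) ≤ L^γ * K^(-(α+β)) := by
  have hK0 : (0:ℝ) < K := by linarith
  have h2 : M^(-β) ≤ K^(-β) := rpow_neg_anti hK0 hKM (by linarith)
  calc L^γ * K^(-α) * M^(-β) ≤ L^γ * K^(-α) * K^(-β) := by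
        refine mul_le_mul_of_nonneg_left h2 (by positivity)
  _ = L^γ * K^(-(α+β)) := by
      rw [neg_add, Real.rpow_add hK0]
      ring

lemma half (α β γ : ℝ) (hα : 0 ≤ α) (hβ : 0 ≤ β) (hγ : 0 ≤ γ)
    (hsum : (d:ℝ)/2 < α + β) (hmax : max α β ≠ (d:ℝ)/2)
    (h1 : γ ≤ α) (h2 : γ ≤ β) (h3 : γ ≤ α + β - (d:ℝ)/2) :
    ∃ C : ℝ, 0 ≤ C ∧ ∀ (v : Fin d → ℤ) (F : Finset (Fin d → ℤ)),
      (∀ k ∈ F, lam k ≤ lam (v - k)) →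
      ∑ k ∈ F, lam v ^ γ / (lam k ^ α * lam (v - k) ^ β) ≤ C := by
  rcases lt_or_ge ((d:ℝ)/2) α with hα2 | hα2
  · -- α > d/2 : use J1 on α
    obtain ⟨C1, hC10, hC1⟩ := J1 (d := d) α hα2
    refine ⟨4^β * C1, by positivity, fun v F hF => ?_⟩
    calc ∑ k ∈ F, lam v ^ γ / (lam k ^ α * lam (v - k) ^ β)
        ≤ ∑ k ∈ F, 4^β * lam k ^ (-α) := by
          refine Finset.sum_le_sum fun k hk => ?_
          rw [term_rw]
          exact aux1 (one_le_lam v) (one_le_lam k) (one_le_lam (v-k))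
            (lam_le_four_of_le (hF k hk)) hβ h2
    _ = 4^β * ∑ k ∈ F, lam k ^ (-α) := by rw [Finset.mul_sum]
    _ ≤ 4^β * C1 := by
        refine mul_le_mul_of_nonneg_left (hC1 F) (by positivity)
  rcases h3.lt_or_eq with hlt | heq
  · -- strict subcritical : use J1 on α + β₂
    set β₂ : ℝ := (((d:ℝ)/2 - α) + (β - γ))/2 with hb
    have hd2 : (d:ℝ)/2 - α < β - γ := by linarith
    have hb0 : 0 ≤ β₂ := by
      have : 0 ≤ (d:ℝ)/2 - α := by linarith
      have : (d:ℝ)/2 - α < β - γ := hd2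
      rw [hb]; linarith
    have hb2 : β₂ ≤ β - γ := by rw [hb]; linarith
    have hb3 : (d:ℝ)/2 < α + β₂ := by rw [hb]; linarith
    obtain ⟨C1, hC10, hC1⟩ := J1 (d := d) (α + β₂) hb3
    refine ⟨4^β * C1, by positivity, fun v F hF => ?_⟩
    calc ∑ k ∈ F, lam v ^ γ / (lam k ^ α * lam (v - k) ^ β)
        ≤ ∑ k ∈ F, 4^β * lam k ^ (-(α+β₂)) := by
          refine Finset.sum_le_sum fun k hk => ?_
          rw [term_rw]
          exact aux2 (one_le_lam v) (one_le_lam k) (one_le_lam (v-k))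
            (lam_le_four_of_le (hF k hk)) (hF k hk) hb0 hb2 hγ
    _ = 4^β * ∑ k ∈ F, lam k ^ (-(α+β₂)) := by rw [Finset.mul_sum]
    _ ≤ 4^β * C1 := mul_le_mul_of_nonneg_left (hC1 F) (by positivity)
  · -- endpoint : γ = α + β - d/2, α < d/2, β < d/2
    have hβd : β ≤ (d:ℝ)/2 := by linarith
    have hβlt : β < (d:ℝ)/2 := by
      rcases hβd.lt_or_eq with h | h
      · exact h
      · exfalso; apply hmax; rw [max_eq_right (by linarith : α ≤ β), h]
    have hαlt : α < (d:ℝ)/2 := by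
      rcases hα2.lt_or_eq with h | h
      · exact h
      · exfalso; apply hmax; rw [max_eq_left (by linarith : β ≤ α), h]
    obtain ⟨C2, hC20, hC2⟩ := J2 (d := d) α hα hαlt
    obtain ⟨C3, hC30, hC3⟩ := J3 (d := d) (α+β) hsum
    refine ⟨4^β * C2 + C3, by positivity, fun v F hF => ?_⟩
    have hL1 : 1 ≤ lam v := one_le_lam v
    have hL0 : (0:ℝ) < lam v := lam_pos v
    rw [← Finset.sum_filter_add_sum_filter_not F (fun k => lam k ≤ lam v)]
    have hpart1 : ∑ k ∈ F.filter (fun k => lam k ≤ lam v),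
        lam v ^ γ / (lam k ^ α * lam (v - k) ^ β) ≤ 4^β * C2 := by
      calc ∑ k ∈ F.filter (fun k => lam k ≤ lam v),
            lam v ^ γ / (lam k ^ α * lam (v - k) ^ β)
          ≤ ∑ k ∈ F.filter (fun k => lam k ≤ lam v),
            (4^β * lam v ^ (γ-β)) * lam k ^ (-α) := by
            refine Finset.sum_le_sum fun k hk => ?_
            rw [term_rw]
            calc lam v ^ γ * lam k ^ (-α) * lam (v-k) ^ (-β)
                ≤ 4^β * lam v ^(γ-β) * lam k ^ (-α) :=
                  aux_base (α := α) (γ := γ) (one_le_lam v) (one_le_lam k) (one_le_lam (v-k))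
                    (lam_le_four_of_le (hF k (Finset.mem_filter.mp hk).1)) hβ
            _ = (4^β * lam v ^ (γ-β)) * lam k ^ (-α) := by ring
      _ = (4^β * lam v ^ (γ-β)) * ∑ k ∈ F.filter (fun k => lam k ≤ lam v), lam k ^ (-α) := by
            rw [Finset.mul_sum]
      _ ≤ (4^β * lam v ^ (γ-β)) * (C2 * lam v ^ ((d:ℝ)/2 - α)) := by
            refine mul_le_mul_of_nonneg_left ?_ (by positivity)
            exact hC2 (lam v) hL1 _ (fun k hk => (Finset.mem_filter.mp hk).2)
      _ = 4^β * C2 * (lam v ^ (γ-β) * lam v ^ ((d:ℝ)/2 - α)) := by ring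
      _ = 4^β * C2 := by
            rw [← Real.rpow_add hL0]
            have : γ - β + ((d:ℝ)/2 - α) = 0 := by rw [heq]; ring
            rw [this, Real.rpow_zero, mul_one]
    have hpart2 : ∑ k ∈ F.filter (fun k => ¬ lam k ≤ lam v),
        lam v ^ γ / (lam k ^ α * lam (v - k) ^ β) ≤ C3 := by
      calc ∑ k ∈ F.filter (fun k => ¬ lam k ≤ lam v),
            lam v ^ γ / (lam k ^ α * lam (v - k) ^ β)
          ≤ ∑ k ∈ F.filter (fun k => ¬ lam k ≤ lam v),
            lam v ^ γ * lam k ^ (-(α+β)) := by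
            refine Finset.sum_le_sum fun k hk => ?_
            rw [term_rw]
            exact aux3b (one_le_lam v) (one_le_lam k) (one_le_lam (v-k))
              (hF k (Finset.mem_filter.mp hk).1) hβ
      _ = lam v ^ γ * ∑ k ∈ F.filter (fun k => ¬ lam k ≤ lam v), lam k ^ (-(α+β)) := by
            rw [Finset.mul_sum]
      _ ≤ lam v ^ γ * (C3 * lam v ^ ((d:ℝ)/2 - (α+β))) := by
            refine mul_le_mul_of_nonneg_left ?_ (by positivity)
            refine hC3 (lam v) hL1 _ (fun k hk => ?_)
            have := (Finset.mem_filter.mp hk).2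
            linarith [not_le.mp this]
      _ = C3 * (lam v ^ γ * lam v ^ ((d:ℝ)/2 - (α+β))) := by ring
      _ = C3 := by
            rw [← Real.rpow_add hL0]
            have : γ + ((d:ℝ)/2 - (α+β)) = 0 := by rw [heq]; ring
            rw [this, Real.rpow_zero, mul_one]
    linarith

lemma SUF (α β γ : ℝ) (hα : 0 ≤ α) (hβ : 0 ≤ β) (hγ : 0 ≤ γ)
    (hsum : (d:ℝ)/2 < α + β) (hmax : max α β ≠ (d:ℝ)/2)
    (h1 : γ ≤ α) (h2 : γ ≤ β) (h3 : γ ≤ α + β - (d:ℝ)/2) :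
    ∃ C : ℝ, 0 ≤ C ∧ ∀ (v : Fin d → ℤ) (F : Finset (Fin d → ℤ)),
      ∑ k ∈ F, lam v ^ γ / (lam k ^ α * lam (v - k) ^ β) ≤ C := by
  obtain ⟨CA, hCA0, hCA⟩ := half (d := d) α β γ hα hβ hγ hsum hmax h1 h2 h3
  obtain ⟨CB, hCB0, hCB⟩ := half (d := d) β α γ hβ hα hγ (by linarith) (by rwa [max_comm]) h2 h1
    (by linarith)
  refine ⟨CA + CB, by linarith, fun v F => ?_⟩
  rw [← Finset.sum_filter_add_sum_filter_not F (fun k => lam k ≤ lam (v - k))]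
  have hA : ∑ k ∈ F.filter (fun k => lam k ≤ lam (v - k)),
      lam v ^ γ / (lam k ^ α * lam (v - k) ^ β) ≤ CA :=
    hCA v _ (fun k hk => (Finset.mem_filter.mp hk).2)
  have hB : ∑ k ∈ F.filter (fun k => ¬ lam k ≤ lam (v - k)),
      lam v ^ γ / (lam k ^ α * lam (v - k) ^ β) ≤ CB := by
    set F2 := F.filter (fun k => ¬ lam k ≤ lam (v - k)) with hF2
    have hinj : ∀ x ∈ F2, ∀ y ∈ F2, v - x = v - y → x = y := by
      intro x _ y _ h
      have := congrArg (v - ·) h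
      simpa using this
    have himg : ∑ j ∈ F2.image (fun k => v - k),
        lam v ^ γ / (lam j ^ β * lam (v - j) ^ α)
        = ∑ k ∈ F2, lam v ^ γ / (lam (v - k) ^ β * lam (v - (v - k)) ^ α) :=
      Finset.sum_image hinj
    have hsimp : ∀ k : Fin d → ℤ, v - (v - k) = k := fun k => by
      ext i; simp
    calc ∑ k ∈ F2, lam v ^ γ / (lam k ^ α * lam (v - k) ^ β)
        = ∑ j ∈ F2.image (fun k => v - k),
            lam v ^ γ / (lam j ^ β * lam (v - j) ^ α) := by
          rw [himg]
          apply Finset.sum_congr rfl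
          intro k _
          rw [hsimp k, mul_comm]
    _ ≤ CB := by
        refine hCB v _ (fun j hj => ?_)
        rw [Finset.mem_image] at hj
        obtain ⟨k, hk, rfl⟩ := hj
        rw [hF2, Finset.mem_filter] at hk
        rw [hsimp k]
        linarith [not_le.mp hk.2]
  linarith

lemma term_nonneg (v k : Fin d → ℤ) (α β γ : ℝ) :
    0 ≤ lam v ^ γ / (lam k ^ α * lam (v - k) ^ β) := by
  have := lam_pos v; have := lam_pos k; have := lam_pos (v - k)
  positivity

lemma lam_const (n : ℕ) : lam (fun _ : Fin d => (n:ℤ)) = 1 + (d:ℝ) * (n:ℝ)^2 := by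
  simp [lam, Finset.sum_const, Finset.card_univ, mul_comm]

lemma unbounded_aux (hd : 1 ≤ d) {ε : ℝ} (hε : 0 < ε) {c : ℝ} (hc : 0 < c) (Cr : ℝ) :
    ∃ n : ℕ, Cr < c * (1 + (d:ℝ) * (n:ℝ)^2) ^ ε := by
  obtain ⟨x₀, hx₀⟩ := (Filter.eventually_atTop).mp ((tendsto_rpow_atTop hε).eventually_gt_atTop (Cr/c))
  obtain ⟨n, hn⟩ := exists_nat_ge (max x₀ 1)
  refine ⟨n, ?_⟩
  have hn1 : (1:ℝ) ≤ (n:ℝ) := le_trans (le_max_right _ _) hn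
  have hnx : x₀ ≤ (n:ℝ) := le_trans (le_max_left _ _) hn
  have h1 : Cr / c < (n:ℝ) ^ ε := hx₀ _ hnx
  have h2 : ((n:ℝ)) ^ ε ≤ (1 + (d:ℝ) * (n:ℝ)^2) ^ ε := by
    refine Real.rpow_le_rpow (by linarith) ?_ hε.le
    have hd1 : (1:ℝ) ≤ (d:ℝ) := by exact_mod_cast hd
    nlinarith
  calc Cr = c * (Cr / c) := by field_simp
  _ < c * ((n:ℝ)) ^ ε := by exact mul_lt_mul_of_pos_left h1 hc
  _ ≤ c * (1 + (d:ℝ) * (n:ℝ)^2) ^ ε := mul_le_mul_of_nonneg_left h2 hc.le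

/-- Regularity of discrete convolutions:
if `α + β > d/2` and `max(α,β) ≠ d/2`, then
`sup_{v ∈ ℤ^d} Σ_{k ∈ ℤ^d} (λ_v)^γ / [(λ_k)^α (λ_{v−k})^β] < ∞`
if and only if `γ ≤ min(α, β, α + β − d/2)`. -/
theorem discrete_conv_regularity (d : ℕ) (hd : 1 ≤ d) (α β γ : ℝ)
    (hα : 0 ≤ α) (hβ : 0 ≤ β) (hγ : 0 ≤ γ)
    (hsum : α + β > (d : ℝ) / 2) (hmax : max α β ≠ (d : ℝ) / 2) :
    (⨆ v : Fin d → ℤ, ∑' k : Fin d → ℤ,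
        ENNReal.ofReal ((lam v) ^ γ / ((lam k) ^ α * (lam (v - k)) ^ β))) < ⊤
      ↔ γ ≤ min α (min β (α + β - (d : ℝ) / 2)) := by
  set S : (Fin d → ℤ) → ℝ≥0∞ := fun v => ∑' k : Fin d → ℤ,
    ENNReal.ofReal ((lam v) ^ γ / ((lam k) ^ α * (lam (v - k)) ^ β)) with hS
  constructor
  · -- necessity
    intro hfin
    by_contra hcon
    rw [not_le] at hcon
    set Cr := (⨆ v, S v).toReal with hCr
    have key : ∀ (b : ℝ) (v : Fin d → ℤ), ENNReal.ofReal b ≤ S v → b ≤ Cr := by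
      intro b v hb
      have h1 : S v ≤ ⨆ v, S v := le_iSup _ v
      exact (ENNReal.ofReal_le_iff_le_toReal hfin.ne).mp (hb.trans h1)
    rcases min_lt_iff.mp hcon with hA | hBC
    · -- α < γ : diagonal term k = v
      obtain ⟨n, hn⟩ := unbounded_aux (d := d) hd (show 0 < γ - α by linarith) one_pos Cr
      set v : Fin d → ℤ := fun _ => (n:ℤ) with hv
      have hterm : lam v ^ γ / (lam v ^ α * lam (v - v) ^ β)
          = (1 + (d:ℝ) * (n:ℝ)^2) ^ (γ - α) := by
        rw [sub_self, lam_zero, Real.one_rpow, mul_one, ← Real.rpow_sub (lam_pos v),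
          hv, lam_const]
      have hlow : ENNReal.ofReal (1 * (1 + (d:ℝ) * (n:ℝ)^2) ^ (γ - α)) ≤ S v := by
        rw [one_mul, ← hterm]
        exact ENNReal.le_tsum v
      linarith [key _ v hlow]
    rcases min_lt_iff.mp hBC with hB | hC
    · -- β < γ : term k = 0
      obtain ⟨n, hn⟩ := unbounded_aux (d := d) hd (show 0 < γ - β by linarith) one_pos Cr
      set v : Fin d → ℤ := fun _ => (n:ℤ) with hv
      have hterm : lam v ^ γ / (lam (0 : Fin d → ℤ) ^ α * lam (v - 0) ^ β)
          = (1 + (d:ℝ) * (n:ℝ)^2) ^ (γ - β) := by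
        rw [sub_zero, lam_zero, Real.one_rpow, one_mul, ← Real.rpow_sub (lam_pos v),
          hv, lam_const]
      have hlow : ENNReal.ofReal (1 * (1 + (d:ℝ) * (n:ℝ)^2) ^ (γ - β)) ≤ S v := by
        rw [one_mul, ← hterm]
        exact ENNReal.le_tsum 0
      linarith [key _ v hlow]
    · -- α + β - d/2 < γ : box lower bound
      have hd0 : (0:ℝ) < (d:ℝ) := by exact_mod_cast hd
      set c : ℝ := (4:ℝ)^(-β) * ((d:ℝ)) ^ (-((d:ℝ)/2)) with hc
      have hcpos : 0 < c := by positivity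
      obtain ⟨n, hn⟩ := unbounded_aux (d := d) hd
        (show 0 < γ - α - β + (d:ℝ)/2 by linarith) hcpos Cr
      set v : Fin d → ℤ := fun _ => (n:ℤ) with hv
      set L : ℝ := 1 + (d:ℝ) * (n:ℝ)^2 with hLdef
      have hLv : lam v = L := lam_const n
      have hL1 : (1:ℝ) ≤ L := by rw [← hLv]; exact one_le_lam v
      have hL0 : (0:ℝ) < L := by linarith
      set K : Finset (Fin d → ℤ) := Fintype.piFinset (fun _ : Fin d => Finset.Icc (0:ℤ) (n:ℤ))
        with hK
      have hcardK : (K.card : ℝ) = ((n:ℝ)+1)^d := by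
        rw [hK, Fintype.card_piFinset]
        simp only [Int.card_Icc, sub_zero]
        rw [Finset.prod_const, Finset.card_univ, Fintype.card_fin]
        push_cast
        norm_num
      have hbox : ∀ k ∈ K, lam k ≤ L ∧ lam (v - k) ≤ 4 * L := by
        intro k hk
        rw [hK, Fintype.mem_piFinset] at hk
        have hlamk : lam k ≤ L := by
          rw [lam, hLdef]
          have : ∑ i, ((k i : ℝ))^2 ≤ ∑ _i : Fin d, ((n:ℝ))^2 := by
            refine Finset.sum_le_sum fun i _ => ?_
            have := Finset.mem_Icc.mp (hk i)
            have h0 : (0:ℝ) ≤ (k i : ℝ) := by exact_mod_cast this.1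
            have h1 : (k i : ℝ) ≤ (n:ℝ) := by exact_mod_cast this.2
            nlinarith
          rw [Finset.sum_const, Finset.card_univ, Fintype.card_fin, nsmul_eq_mul] at this
          linarith
        refine ⟨hlamk, ?_⟩
        have := lam_sub_le v k
        rw [hLv] at this
        linarith
      have hcv : ∀ k ∈ K, (4:ℝ)^(-β) * L ^ (γ - α - β)
          ≤ lam v ^ γ / (lam k ^ α * lam (v - k) ^ β) := by
        intro k hk
        obtain ⟨hk1, hk2⟩ := hbox k hk
        have hkpos := lam_pos k
        have hvkpos := lam_pos (v - k)
        have hden : lam k ^ α * lam (v - k) ^ β ≤ L ^ α * (4*L) ^ β := by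
          refine mul_le_mul (Real.rpow_le_rpow hkpos.le hk1 hα)
            (Real.rpow_le_rpow hvkpos.le hk2 hβ) (by positivity) (by positivity)
        have hid : L ^ γ / (L ^ α * (4*L) ^ β) = (4:ℝ)^(-β) * L ^ (γ - α - β) := by
          rw [Real.mul_rpow (by norm_num) hL0.le, Real.rpow_neg (by norm_num : (0:ℝ) ≤ 4),
            show γ - α - β = γ - (α + β) by ring, Real.rpow_sub hL0,
            Real.rpow_add hL0]
          have h4 : ((4:ℝ)^β) ≠ 0 := by positivity
          have hLα : (L^α) ≠ 0 := by positivity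
          have hLβ : (L^β) ≠ 0 := by positivity
          field_simp
          try exact Or.inl trivial
        rw [← hid, hLv]
        exact div_le_div_of_nonneg_left (by positivity) (by positivity) hden
      have hsumlow : c * L ^ (γ - α - β + (d:ℝ)/2)
          ≤ ∑ k ∈ K, lam v ^ γ / (lam k ^ α * lam (v - k) ^ β) := by
        have h1 : (K.card : ℝ) * ((4:ℝ)^(-β) * L ^ (γ - α - β))
            ≤ ∑ k ∈ K, lam v ^ γ / (lam k ^ α * lam (v - k) ^ β) := by
          have := Finset.card_nsmul_le_sum K _ _ hcv
          rwa [nsmul_eq_mul] at this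
        refine le_trans ?_ h1
        rw [hcardK]
        -- c * L^(e + d/2) ≤ (n+1)^d * (4^(-β) L^e)
        have hLd : L ^ ((d:ℝ)/2) ≤ ((d:ℝ))^((d:ℝ)/2) * ((n:ℝ)+1)^d := by
          have hLle : L ≤ (d:ℝ) * ((n:ℝ)+1)^2 := by
            rw [hLdef]
            have hd1 : (1:ℝ) ≤ (d:ℝ) := by exact_mod_cast hd
            nlinarith [Nat.cast_nonneg (α := ℝ) n]
          calc L ^ ((d:ℝ)/2) ≤ ((d:ℝ) * ((n:ℝ)+1)^2) ^ ((d:ℝ)/2) :=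
                Real.rpow_le_rpow hL0.le hLle (by positivity)
          _ = ((d:ℝ))^((d:ℝ)/2) * ((n:ℝ)+1)^d := by
              rw [Real.mul_rpow hd0.le (by positivity)]
              congr 1
              rw [← Real.rpow_natCast ((n:ℝ)+1) 2, ← Real.rpow_mul (by positivity),
                ← Real.rpow_natCast ((n:ℝ)+1) d]
              congr 1
              ring
        have hexp : L ^ (γ - α - β + (d:ℝ)/2) = L ^ (γ - α - β) * L ^ ((d:ℝ)/2) :=
          Real.rpow_add hL0 _ _
        rw [hexp, hc]
        have hdn : ((d:ℝ))^(-((d:ℝ)/2)) * L ^ ((d:ℝ)/2) ≤ ((n:ℝ)+1)^d := by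
          rw [Real.rpow_neg hd0.le]
          rw [inv_mul_le_iff₀ (by positivity)]
          calc L ^ ((d:ℝ)/2) ≤ ((d:ℝ))^((d:ℝ)/2) * ((n:ℝ)+1)^d := hLd
          _ = ((d:ℝ))^((d:ℝ)/2) * ((n:ℝ)+1)^d := rfl
        calc (4:ℝ)^(-β) * ((d:ℝ))^(-((d:ℝ)/2)) * (L ^ (γ - α - β) * L ^ ((d:ℝ)/2))
            = ((4:ℝ)^(-β) * L ^ (γ - α - β)) * (((d:ℝ))^(-((d:ℝ)/2)) * L ^ ((d:ℝ)/2)) := by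
              ring
        _ ≤ ((4:ℝ)^(-β) * L ^ (γ - α - β)) * ((n:ℝ)+1)^d := by
              refine mul_le_mul_of_nonneg_left hdn (by positivity)
        _ = ((n:ℝ)+1)^d * ((4:ℝ)^(-β) * L ^ (γ - α - β)) := by ring
      have hlow : ENNReal.ofReal (c * L ^ (γ - α - β + (d:ℝ)/2)) ≤ S v := by
        calc ENNReal.ofReal (c * L ^ (γ - α - β + (d:ℝ)/2))
            ≤ ENNReal.ofReal (∑ k ∈ K, lam v ^ γ / (lam k ^ α * lam (v - k) ^ β)) :=
              ENNReal.ofReal_le_ofReal hsumlow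
        _ = ∑ k ∈ K, ENNReal.ofReal (lam v ^ γ / (lam k ^ α * lam (v - k) ^ β)) :=
              ENNReal.ofReal_sum_of_nonneg (fun k _ => term_nonneg v k α β γ)
        _ ≤ S v := ENNReal.sum_le_tsum K
      have := key _ v hlow
      rw [hLdef] at this
      linarith
  · -- sufficiency
    intro hγm
    rw [le_min_iff, le_min_iff] at hγm
    obtain ⟨h1, h2, h3⟩ := hγm
    obtain ⟨C, hC0, hC⟩ := SUF (d := d) α β γ hα hβ hγ hsum hmax h1 h2 h3
    refine lt_of_le_of_lt (iSup_le (a := ENNReal.ofReal C) fun v => ?_) ENNReal.ofReal_lt_top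
    show (∑' k : Fin d → ℤ, ENNReal.ofReal (lam v ^ γ / (lam k ^ α * lam (v - k) ^ β))) ≤ ENNReal.ofReal C
    rw [ENNReal.tsum_eq_iSup_sum]
    refine iSup_le fun F => ?_
    rw [← ENNReal.ofReal_sum_of_nonneg (fun k _ => term_nonneg v k α β γ)]
    exact ENNReal.ofReal_le_ofReal (hC v F)
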